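/- If H is a computable functional unit for ℕ and x is an instruction sequence over I(H) such that ⌈x⌉_H is total, then ⌈x⌉_H is a computable method operation on ℕ; that is, every derived method operation of a computable functional unit for ℕ is computable. -/

import Mathlib

/-- Primitive instructions: plain basic `f.m`, positive test `+f.m`, negative test `-f.m`
(method names are natural numbers, there is a single focus `f`), forward jump `#l`,
backward jump `\l`, and the positive/negative termination instructions `!t` / `!f`. -/
inductive Instr : Type where
  | basic (m : ℕ)
  | postest (m : ℕ)
  | negtest (m : ℕ)
  | fjump (l : ℕ)
  | bjump (l : ℕ)
  | haltT
  | haltF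
deriving DecidableEq

/-- A functional unit for a state space `S`: a finite, functional set of
(method name, method operation) pairs, where a method operation is a total
function `S → Bool × S`. -/
structure FU (S : Type*) where
  carrier : Set (ℕ × (S → Bool × S))
  finite : carrier.Finite
  functional : ∀ {m : ℕ} {M M' : S → Bool × S},
    (m, M) ∈ carrier → (m, M') ∈ carrier → M = M'

/-- The interface of a functional unit: the set of method names occurring in it. -/
def FU.iface {S : Type*} (H : FU S) : Set ℕ := {m | ∃ M, (m, M) ∈ H.carrier}

/-- The method operation named `m` in `H` (an arbitrary fixed value if `m ∉ I(H)`). -/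
noncomputable def FU.op {S : Type*} (H : FU S) (m : ℕ) (s : S) : Bool × S :=
  letI := Classical.propDecidable
  if h : ∃ M, (m, M) ∈ H.carrier then h.choose s else (true, s)

/-- The restriction `⟨I, H⟩` of a functional unit to a set `I` of method names. -/
def FU.restrict {S : Type*} (H : FU S) (I : Set ℕ) : FU S where
  carrier := {p ∈ H.carrier | p.1 ∈ I}
  finite := H.finite.subset (Set.sep_subset _ _)
  functional := fun hM hM' => H.functional hM.1 hM'.1

/-- The method names used by an instruction all belong to `I`. -/
def Instr.namesIn (I : Set ℕ) : Instr → Prop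
  | .basic m => m ∈ I
  | .postest m => m ∈ I
  | .negtest m => m ∈ I
  | _ => True

/-- An instruction sequence over a set `I` of method names: a finite nonempty list of
primitive instructions whose method names belong to `I`. -/
def InstrSeqOver (I : Set ℕ) (x : List Instr) : Prop :=
  x ≠ [] ∧ ∀ u ∈ x, u.namesIn I

/-- `Exec H x i s b s'` : execution of the instruction sequence `x` on the functional
unit `H`, from (0-based) position `i` in state `s`, terminates delivering the Boolean
value `b` with final state `s'`.  (Position `i` here corresponds to the 1-based
position `i+1`; positions outside the sequence, jumps `#0`/`\0`, and infinite
executions admit no derivation, i.e. execution does not terminate.) -/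
inductive Exec {S : Type*} (H : FU S) (x : List Instr) : ℕ → S → Bool → S → Prop where
  | basic {i : ℕ} {s : S} {b : Bool} {s' : S} (m : ℕ)
      (hu : x[i]? = some (Instr.basic m))
      (h : Exec H x (i + 1) (H.op m s).2 b s') : Exec H x i s b s'
  | posT {i : ℕ} {s : S} {b : Bool} {s' : S} (m : ℕ)
      (hu : x[i]? = some (Instr.postest m)) (hr : (H.op m s).1 = true)
      (h : Exec H x (i + 1) (H.op m s).2 b s') : Exec H x i s b s'
  | posF {i : ℕ} {s : S} {b : Bool} {s' : S} (m : ℕ)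
      (hu : x[i]? = some (Instr.postest m)) (hr : (H.op m s).1 = false)
      (h : Exec H x (i + 2) (H.op m s).2 b s') : Exec H x i s b s'
  | negT {i : ℕ} {s : S} {b : Bool} {s' : S} (m : ℕ)
      (hu : x[i]? = some (Instr.negtest m)) (hr : (H.op m s).1 = true)
      (h : Exec H x (i + 2) (H.op m s).2 b s') : Exec H x i s b s'
  | negF {i : ℕ} {s : S} {b : Bool} {s' : S} (m : ℕ)
      (hu : x[i]? = some (Instr.negtest m)) (hr : (H.op m s).1 = false)
      (h : Exec H x (i + 1) (H.op m s).2 b s') : Exec H x i s b s'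
  | fjump {i : ℕ} {s : S} {b : Bool} {s' : S} (l : ℕ)
      (hu : x[i]? = some (Instr.fjump l))
      (h : Exec H x (i + l) s b s') : Exec H x i s b s'
  | bjump {i : ℕ} {s : S} {b : Bool} {s' : S} (l : ℕ)
      (hu : x[i]? = some (Instr.bjump l)) (hl : l ≤ i)
      (h : Exec H x (i - l) s b s') : Exec H x i s b s'
  | haltT {i : ℕ} {s : S} (hu : x[i]? = some Instr.haltT) : Exec H x i s true s
  | haltF {i : ℕ} {s : S} (hu : x[i]? = some Instr.haltF) : Exec H x i s false s

/-- `M` is a derived method operation of `H`: there is an instruction sequence `x`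
over `I(H)` whose produced partial method operation `⌈x⌉_H` is total and equals `M`. -/
def DerivedOp {S : Type*} (H : FU S) (M : S → Bool × S) : Prop :=
  ∃ x : List Instr, InstrSeqOver H.iface x ∧ ∀ s, Exec H x 0 s (M s).1 (M s).2

/-- `H ≤ H'` : every method operation of `H` is a derived method operation of `H'`. -/
def FU.le {S : Type*} (H H' : FU S) : Prop :=
  ∀ m M, (m, M) ∈ H.carrier → DerivedOp H' M

/-- `H ≡ H'` : `H ≤ H'` and `H' ≤ H`. -/
def FU.equiv {S : Type*} (H H' : FU S) : Prop := FU.le H H' ∧ FU.le H' H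

/-- A method operation on ℕ is computable if both its components are. -/
def ComputableMO (M : ℕ → Bool × ℕ) : Prop :=
  Computable (fun n => (M n).1) ∧ Computable (fun n => (M n).2)

/-- A functional unit for ℕ is computable if all its method operations are. -/
def ComputableFU (H : FU ℕ) : Prop :=
  ∀ m M, (m, M) ∈ H.carrier → ComputableMO M

/-- One execution step as a state-transformer on `(position, state)` pairs,
`inr` meaning termination with a delivered value. -/
noncomputable def step (H : FU ℕ) (x : List Instr) (p : ℕ × ℕ) : (ℕ × ℕ) ⊕ (Bool × ℕ) :=
  match x[p.1]? with
  | some (.basic m) => .inl (p.1 + 1, (H.op m p.2).2)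
  | some (.postest m) => .inl (if (H.op m p.2).1 then p.1 + 1 else p.1 + 2, (H.op m p.2).2)
  | some (.negtest m) => .inl (if (H.op m p.2).1 then p.1 + 2 else p.1 + 1, (H.op m p.2).2)
  | some (.fjump l) => .inl (p.1 + l, p.2)
  | some (.bjump l) => if l ≤ p.1 then .inl (p.1 - l, p.2) else .inl p
  | some .haltT => .inr (true, p.2)
  | some .haltF => .inr (false, p.2)
  | none => .inl p

noncomputable def stepS (H : FU ℕ) (x : List Instr) :
    ((ℕ × ℕ) ⊕ (Bool × ℕ)) → ((ℕ × ℕ) ⊕ (Bool × ℕ)) :=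
  Sum.elim (step H x) Sum.inr

theorem stepS_inr (H : FU ℕ) (x : List Instr) (r : Bool × ℕ) :
    stepS H x (.inr r) = .inr r := rfl

theorem iter_mono (H : FU ℕ) (x : List Instr) {n m : ℕ} {q} {r : Bool × ℕ}
    (h : (stepS H x)^[n] q = .inr r) (hnm : n ≤ m) : (stepS H x)^[m] q = .inr r := by
  obtain ⟨k, rfl⟩ := Nat.exists_eq_add_of_le hnm
  rw [Nat.add_comm, Function.iterate_add_apply, h]
  exact Function.iterate_fixed rfl k

theorem exec_iter (H : FU ℕ) (x : List Instr) {i s b s'}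
    (h : Exec H x i s b s') : ∃ n, (stepS H x)^[n] (.inl (i, s)) = .inr (b, s') := by
  induction h with
  | basic m hu h ih =>
    obtain ⟨n, hn⟩ := ih
    exact ⟨n + 1, by rw [Function.iterate_succ_apply]; simpa [stepS, step, hu] using hn⟩
  | posT m hu hr h ih =>
    obtain ⟨n, hn⟩ := ih
    exact ⟨n + 1, by rw [Function.iterate_succ_apply]; simpa [stepS, step, hu, hr] using hn⟩
  | posF m hu hr h ih =>
    obtain ⟨n, hn⟩ := ih
    exact ⟨n + 1, by rw [Function.iterate_succ_apply]; simpa [stepS, step, hu, hr] using hn⟩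
  | negT m hu hr h ih =>
    obtain ⟨n, hn⟩ := ih
    exact ⟨n + 1, by rw [Function.iterate_succ_apply]; simpa [stepS, step, hu, hr] using hn⟩
  | negF m hu hr h ih =>
    obtain ⟨n, hn⟩ := ih
    exact ⟨n + 1, by rw [Function.iterate_succ_apply]; simpa [stepS, step, hu, hr] using hn⟩
  | fjump l hu h ih =>
    obtain ⟨n, hn⟩ := ih
    exact ⟨n + 1, by rw [Function.iterate_succ_apply]; simpa [stepS, step, hu] using hn⟩
  | bjump l hu hl h ih =>
    obtain ⟨n, hn⟩ := ih
    exact ⟨n + 1, by rw [Function.iterate_succ_apply]; simpa [stepS, step, hu, hl] using hn⟩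
  | haltT hu => exact ⟨1, by simp [stepS, step, hu]⟩
  | haltF hu => exact ⟨1, by simp [stepS, step, hu]⟩

theorem op_eq (H : FU ℕ) {m : ℕ} {Mo : ℕ → Bool × ℕ} (hm : (m, Mo) ∈ H.carrier) :
    H.op m = Mo := by
  have hex : ∃ M', (m, M') ∈ H.carrier := ⟨Mo, hm⟩
  funext s
  unfold FU.op
  rw [dif_pos hex]
  exact congrFun (H.functional hex.choose_spec hm) s

theorem op_computable (H : FU ℕ) (hH : ComputableFU H) {m : ℕ} (hm : m ∈ H.iface) :
    Computable (H.op m) := by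
  obtain ⟨Mo, hmem⟩ := hm
  obtain ⟨h1, h2⟩ := hH m Mo hmem
  rw [op_eq H hmem]
  exact (h1.pair h2).of_eq fun s => rfl

/-- Gluing lemma: a function of `(i, s)` which is computable in `s` for each
`i < n` and agrees with a computable function for `i ≥ n` is computable. -/
theorem computable_of_fin {σ : Type} [Primcodable σ] :
    ∀ (n : ℕ) (F G : ℕ × ℕ → σ), (∀ i < n, Computable fun s => F (i, s)) →
      (∀ i, n ≤ i → ∀ s, F (i, s) = G (i, s)) → Computable G → Computable F := by
  intro n
  induction n with
  | zero =>
    intro F G _ h2 hG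
    exact hG.of_eq fun p => (h2 p.1 (Nat.zero_le _) p.2).symm
  | succ n ih =>
    intro F G h1 h2 hG
    refine ih F (fun p => bif p.1 == n then F (n, p.2) else G p) ?_ ?_ ?_
    · intro i hi; exact h1 i (Nat.lt_succ_of_lt hi)
    · intro i hi s
      rcases eq_or_lt_of_le hi with rfl | hlt
      · simp
      · have : (i == n) = false := by simp [Nat.ne_of_gt hlt]
        simp [this, h2 i hlt s]
    · exact Computable.cond
        ((Primrec.beq.comp Primrec.fst (Primrec.const n)).to_comp)
        ((h1 n (Nat.lt_succ_self n)).comp Computable.snd) hG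

theorem step_computable (H : FU ℕ) (hH : ComputableFU H) (x : List Instr)
    (hx : InstrSeqOver H.iface x) : Computable (step H x) := by
  refine computable_of_fin x.length (step H x) (fun p => Sum.inl p) ?_ ?_
    (Computable.sumInl.comp Computable.id)
  · intro i hi
    rcases hu : x[i]? with _ | u
    · simp [List.getElem?_eq_none_iff] at hu; omega
    have hmem : u ∈ x := by
      have := List.getElem?_eq_some_iff.mp hu
      obtain ⟨h, rfl⟩ := this
      exact List.getElem_mem _
    have hnames := hx.2 u hmem
    cases u with
    | basic m =>
      have hop := op_computable H hH hnames
      exact (Computable.sumInl.comp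
        ((Computable.const (i + 1)).pair (Computable.snd.comp hop))).of_eq
        fun s => by simp [step, hu]
    | postest m =>
      have hop := op_computable H hH hnames
      refine (Computable.sumInl.comp
        (((Computable.fst.comp hop).cond (Computable.const (i + 1))
          (Computable.const (i + 2))).pair (Computable.snd.comp hop))).of_eq
        fun s => by cases hb : (H.op m s).1 <;> simp [step, hu, hb]
    | negtest m =>
      have hop := op_computable H hH hnames
      refine (Computable.sumInl.comp
        (((Computable.fst.comp hop).cond (Computable.const (i + 2))
          (Computable.const (i + 1))).pair (Computable.snd.comp hop))).of_eq
        fun s => by cases hb : (H.op m s).1 <;> simp [step, hu, hb]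
    | fjump l =>
      exact (Computable.sumInl.comp
        ((Computable.const (i + l)).pair Computable.id)).of_eq fun s => by simp [step, hu]
    | bjump l =>
      by_cases hl : l ≤ i
      · exact (Computable.sumInl.comp
          ((Computable.const (i - l)).pair Computable.id)).of_eq
          fun s => by simp [step, hu, hl]
      · exact (Computable.sumInl.comp
          ((Computable.const i).pair Computable.id)).of_eq
          fun s => by simp [step, hu, hl]
    | haltT =>
      exact (Computable.sumInr.comp
        ((Computable.const true).pair Computable.id)).of_eq fun s => by simp [step, hu]
    | haltF =>
      exact (Computable.sumInr.comp
        ((Computable.const false).pair Computable.id)).of_eq fun s => by simp [step, hu]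
  · intro i hi s
    have : x[i]? = none := by
      rw [List.getElem?_eq_none_iff]; exact hi
    simp [step, this]


/-- Every derived method operation of a computable functional unit for ℕ is
computable: if `x` is an instruction sequence over `I(H)` and `⌈x⌉_H` is total
(with value `M s` at each `s`), then `M` is a computable method operation. -/
theorem derivedOp_computable (H : FU ℕ) (hH : ComputableFU H)
    (x : List Instr) (hx : InstrSeqOver H.iface x)
    (M : ℕ → Bool × ℕ) (hM : ∀ s, Exec H x 0 s (M s).1 (M s).2) :
    ComputableMO M := by
  have hstep := step_computable H hH x hx
  have hstepS : Computable (stepS H x) := by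
    have := Computable.sumCasesOn (σ := (ℕ × ℕ) ⊕ (Bool × ℕ)) Computable.id
      ((hstep.comp Computable.snd).to₂)
      ((Computable.sumInr.comp Computable.snd).to₂)
    exact this.of_eq fun q => by cases q <;> rfl
  have hiter : Computable fun p : ℕ × ((ℕ × ℕ) ⊕ (Bool × ℕ)) => (stepS H x)^[p.1] p.2 := by
    refine (Computable.nat_rec (σ := (ℕ × ℕ) ⊕ (Bool × ℕ)) Computable.fst Computable.snd
      ((hstepS.comp (Computable.snd.comp Computable.snd)).to₂)).of_eq fun p => ?_
    induction p.1 with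
    | zero => rfl
    | succ n ih => simp [Function.iterate_succ_apply', ← ih]
  set g : ℕ × ℕ → Option (Bool × ℕ) :=
    fun p => Sum.elim (fun _ => (none : Option (Bool × ℕ))) some
      ((stepS H x)^[p.1] (Sum.inl (0, p.2))) with hg_def
  have hg : Computable g := by
    have hf : Computable fun p : ℕ × ℕ => (stepS H x)^[p.1] (Sum.inl (0, p.2)) :=
      hiter.comp (Computable.fst.pair
        (Computable.sumInl.comp ((Computable.const 0).pair Computable.snd)))
    have := Computable.sumCasesOn (σ := Option (Bool × ℕ)) hf
      ((Computable.const none).to₂) ((Computable.option_some.comp Computable.snd).to₂)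
    exact this.of_eq fun p => by cases h : (stepS H x)^[p.1] (Sum.inl (0, p.2)) <;>
      simp [hg_def, h]
  have hpart : Partrec fun s : ℕ => Nat.rfindOpt fun n => g (n, s) := by
    apply Partrec.rfindOpt
    exact (hg.comp (Computable.snd.pair Computable.fst)).to₂
  have hmem : ∀ {a : Bool × ℕ} {n : ℕ} {s : ℕ},
      a ∈ g (n, s) ↔ (stepS H x)^[n] (Sum.inl (0, s)) = .inr a := by
    intro a n s
    constructor
    · intro h
      rcases hq : (stepS H x)^[n] (Sum.inl (0, s)) with q | r <;>
        simp [hg_def, hq, Option.mem_def] at h ⊢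
      exact h ▸ rfl
    · intro h; simp [hg_def, h, Option.mem_def]
  have hMcomp : Computable M := by
    refine Partrec.of_eq_tot hpart fun s => ?_
    rw [Nat.rfindOpt_mono]
    · obtain ⟨n, hn⟩ := exec_iter H x (hM s)
      exact ⟨n, hmem.mpr hn⟩
    · intro a m n hmn ha
      exact hmem.mpr (iter_mono H x (hmem.mp ha) hmn)
  exact ⟨Computable.fst.comp hMcomp, Computable.snd.comp hMcomp⟩
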